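/- In the two-curve setting below: for all 1 ≤ i < j ≤ n, d_{M₁}(x_i, x_j) = (j−i)ε, d_{M₂}(x_i, x_j) = (j−i)η, and (j−i)(C₁ε³ − C₂ε⁵) ≤ d_{M₂}(x_i, x_j) − d_{M₁}(x_i, x_j) ≤ (j−i)·C₁ε³ = C₁ε²·d_{M₁}(x_i, x_j). In particular, if C₂ε² ≤ C₁/2, then d_{M₂}(x_i, x_j) − d_{M₁}(x_i, x_j) ≥ (C₁/2)·ε²·d_{M₁}(x_i, x_j). -/

import Mathlib

open Set
open scoped ENNReal

/-- The intrinsic distance on a set `A`: the infimum of the lengths (total variations) of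
continuous curves `γ : [0,1] → A` joining the two points, in `[0,∞]`. -/
noncomputable def intrinsicDist {E : Type*} [PseudoEMetricSpace E] (A : Set E) (x x' : E) :
    ℝ≥0∞ :=
  sInf {L | ∃ γ : ℝ → E, ContinuousOn γ (Icc 0 1) ∧ MapsTo γ (Icc 0 1) A ∧
    γ 0 = x ∧ γ 1 = x' ∧ L = eVariationOn γ (Icc 0 1)}

/-- The point `(x, y) ∈ ℝ²` (as `EuclideanSpace ℝ (Fin 2)`). -/
noncomputable def pt2 (x y : ℝ) : EuclideanSpace ℝ (Fin 2) :=
  (WithLp.equiv 2 (Fin 2 → ℝ)).symm ![x, y]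

/-- The tri-cube function `w(t) = (1 − |t|³)₊³`. -/
noncomputable def triCube (t : ℝ) : ℝ := (max (1 - |t| ^ 3) 0) ^ 3

/-- The bump-train function `g(t) = A(ε/2)²·Σ_{i=1}^{n−1} w((t − (i−1/2)ε)/(ε/2))`. -/
noncomputable def bumpTrain (A ε : ℝ) (n : ℕ) (t : ℝ) : ℝ :=
  A * (ε / 2) ^ 2 * ∑ i ∈ Finset.range (n - 1), triCube ((t - ((i : ℝ) + 1 / 2) * ε) / (ε / 2))


noncomputable def triCube' (t : ℝ) : ℝ := -9 * t * |t| * (max (1 - |t| ^ 3) 0) ^ 2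

lemma cubePlus_hasDeriv (x : ℝ) : HasDerivAt (fun x : ℝ => (max x 0) ^ 3) (3 * (max x 0) ^ 2) x := by
  rcases lt_trichotomy x 0 with hx | hx | hx
  · have h : (fun x : ℝ => (max x 0) ^ 3) =ᶠ[nhds x] (fun _ => 0) := by
      filter_upwards [eventually_lt_nhds hx] with y hy
      simp [max_eq_right hy.le]
    have := (hasDerivAt_const x (0:ℝ)).congr_of_eventuallyEq h
    simpa [max_eq_right hx.le] using this
  · subst hx
    rw [hasDerivAt_iff_isLittleO]
    have h1 : (fun y : ℝ => (max y 0) ^ 3) =O[nhds 0] (fun y => y ^ 2) := by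
      rw [Asymptotics.isBigO_iff]
      refine ⟨1, ?_⟩
      filter_upwards [Metric.eventually_nhds_iff.2 ⟨1, one_pos, fun {y} hy => hy⟩] with y hy
      simp only [Real.dist_eq, sub_zero] at hy
      have h2 : |max y 0| ≤ |y| := by
        rcases le_or_gt y 0 with h | h
        · simp [max_eq_right h, abs_nonneg]
        · simp [max_eq_left h.le]
      have h3 : |max y 0| ^ 3 ≤ |y| ^ 3 := pow_le_pow_left₀ (abs_nonneg _) h2 3
      calc ‖(max y 0) ^ 3‖ = |max y 0| ^ 3 := by rw [Real.norm_eq_abs, abs_pow]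
        _ ≤ |y| ^ 3 := h3
        _ ≤ |y| ^ 2 := by nlinarith [abs_nonneg y, hy.le]
        _ = 1 * ‖y ^ 2‖ := by rw [one_mul, Real.norm_eq_abs, abs_pow, sq_abs, ← sq_abs]
    have h2 : (fun y : ℝ => y ^ 2) =o[nhds 0] (fun y => y) := by
      simpa using Asymptotics.isLittleO_pow_id (n := 2) one_lt_two
    have := h1.trans_isLittleO h2
    simpa using this
  · have h : (fun x : ℝ => (max x 0) ^ 3) =ᶠ[nhds x] (fun y => y ^ 3) := by
      filter_upwards [eventually_gt_nhds hx] with y hy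
      simp [max_eq_left hy.le]
    have := (hasDerivAt_pow 3 x).congr_of_eventuallyEq h
    simpa [max_eq_left hx.le] using this

lemma abs3_hasDeriv (t : ℝ) : HasDerivAt (fun t : ℝ => |t| ^ 3) (3 * |t| * t) t := by
  rcases lt_trichotomy t 0 with ht | ht | ht
  · have h : (fun t : ℝ => |t| ^ 3) =ᶠ[nhds t] (fun y => -(y ^ 3)) := by
      filter_upwards [eventually_lt_nhds ht] with y hy
      rw [abs_of_neg hy]; ring
    have := ((hasDerivAt_pow 3 t).neg).congr_of_eventuallyEq h
    refine this.congr_deriv ?_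
    rw [abs_of_neg ht]; push_cast; ring
  · subst ht
    rw [hasDerivAt_iff_isLittleO]
    have h1 : (fun y : ℝ => |y| ^ 3) =O[nhds 0] (fun y => y ^ 2) := by
      rw [Asymptotics.isBigO_iff]
      refine ⟨1, ?_⟩
      filter_upwards [Metric.eventually_nhds_iff.2 ⟨1, one_pos, fun {y} hy => hy⟩] with y hy
      simp only [Real.dist_eq, sub_zero] at hy
      calc ‖|y| ^ 3‖ = |y| ^ 3 := by rw [Real.norm_eq_abs, abs_pow, abs_abs]
        _ ≤ |y| ^ 2 := by nlinarith [abs_nonneg y, hy.le]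
        _ = 1 * ‖y ^ 2‖ := by rw [one_mul, Real.norm_eq_abs, abs_pow, sq_abs, ← sq_abs]
    have h2 : (fun y : ℝ => y ^ 2) =o[nhds 0] (fun y => y) := by
      simpa using Asymptotics.isLittleO_pow_id (n := 2) one_lt_two
    have := h1.trans_isLittleO h2
    simpa using this
  · have h : (fun t : ℝ => |t| ^ 3) =ᶠ[nhds t] (fun y => y ^ 3) := by
      filter_upwards [eventually_gt_nhds ht] with y hy
      rw [abs_of_pos hy]
    have := (hasDerivAt_pow 3 t).congr_of_eventuallyEq h
    refine this.congr_deriv ?_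
    rw [abs_of_pos ht]; push_cast; ring

lemma triCube_hasDeriv (t : ℝ) : HasDerivAt triCube (triCube' t) t := by
  have h1 : HasDerivAt (fun t : ℝ => 1 - |t| ^ 3) (-(3 * |t| * t)) t :=
    (abs3_hasDeriv t).const_sub 1
  have h2 := (cubePlus_hasDeriv (1 - |t| ^ 3)).comp t h1
  refine h2.congr_deriv ?_
  simp only [triCube']
  ring

lemma deriv_triCube : deriv triCube = triCube' := by
  funext t; exact (triCube_hasDeriv t).deriv

lemma continuous_triCube' : Continuous triCube' := by
  unfold triCube'; fun_prop

lemma triCube_eq_zero {s : ℝ} (hs : 1 ≤ |s|) : triCube s = 0 := by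
  have : 1 - |s| ^ 3 ≤ 0 := by nlinarith [abs_nonneg s, pow_le_pow_left₀ (by norm_num : (0:ℝ) ≤ 1) hs 3]
  simp [triCube, max_eq_right this]

lemma triCube'_eq_zero {s : ℝ} (hs : 1 ≤ |s|) : triCube' s = 0 := by
  have : 1 - |s| ^ 3 ≤ 0 := by nlinarith [abs_nonneg s, pow_le_pow_left₀ (by norm_num : (0:ℝ) ≤ 1) hs 3]
  simp [triCube', max_eq_right this]


variable {E : Type*} [NormedAddCommGroup E] [NormedSpace ℝ E] [CompleteSpace E]

lemma evar_le_of_sums {α : Type*} [LinearOrder α] {F : Type*} [PseudoEMetricSpace F]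
    (f : α → F) (s : Set α) (C : ℝ≥0∞)
    (h : ∀ (m : ℕ) (u : ℕ → α), Monotone u → (∀ i, u i ∈ s) →
      ∑ i ∈ Finset.range m, edist (f (u (i + 1))) (f (u i)) ≤ C) :
    eVariationOn f s ≤ C := by
  rw [eVariationOn]
  exact iSup_le fun p => h p.1 p.2.1 p.2.2.1 p.2.2.2

/-- Upper bound: variation of a C¹ curve is at most the integral of the speed. -/
lemma evariation_le_integral (Φ Φ' : ℝ → E) (hd : ∀ t, HasDerivAt Φ (Φ' t) t)
    (hc : Continuous Φ') {a b : ℝ} (hab : a ≤ b) :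
    eVariationOn Φ (Icc a b) ≤ ENNReal.ofReal (∫ t in a..b, ‖Φ' t‖) := by
  set F : ℝ → ℝ := fun t => ∫ s in a..t, ‖Φ' s‖ with hF
  have hFmono : ∀ {x y : ℝ}, x ≤ y → F x ≤ F y := by
    intro x y hxy
    have : F y - F x = ∫ s in x..y, ‖Φ' s‖ := by
      rw [hF]
      exact intervalIntegral.integral_interval_sub_left
        ((hc.norm).intervalIntegrable _ _) ((hc.norm).intervalIntegrable _ _)
    have h2 : 0 ≤ ∫ s in x..y, ‖Φ' s‖ :=
      intervalIntegral.integral_nonneg hxy (fun u _ => norm_nonneg _)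
    linarith
  apply evar_le_of_sums
  intro m u hu hus
  have key : ∀ i : ℕ, edist (Φ (u (i + 1))) (Φ (u i)) ≤ ENNReal.ofReal (F (u (i+1)) - F (u i)) := by
    intro i
    have hle : u i ≤ u (i + 1) := hu (Nat.le_succ i)
    have hftc : Φ (u (i+1)) - Φ (u i) = ∫ s in u i..u (i+1), Φ' s :=
      (intervalIntegral.integral_eq_sub_of_hasDerivAt (fun t _ => hd t)
        (hc.intervalIntegrable _ _)).symm
    have h1 : ‖Φ (u (i+1)) - Φ (u i)‖ ≤ ∫ s in u i..u (i+1), ‖Φ' s‖ := by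
      rw [hftc]
      exact intervalIntegral.norm_integral_le_integral_norm hle
    have h2 : (∫ s in u i..u (i+1), ‖Φ' s‖) = F (u (i+1)) - F (u i) :=
      (intervalIntegral.integral_interval_sub_left
        ((hc.norm).intervalIntegrable _ _) ((hc.norm).intervalIntegrable _ _)).symm
    rw [edist_dist, dist_eq_norm]
    exact ENNReal.ofReal_le_ofReal (h1.trans h2.le)
  calc ∑ i ∈ Finset.range m, edist (Φ (u (i + 1))) (Φ (u i))
      ≤ ∑ i ∈ Finset.range m, ENNReal.ofReal (F (u (i+1)) - F (u i)) :=
        Finset.sum_le_sum fun i _ => key i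
    _ = ENNReal.ofReal (∑ i ∈ Finset.range m, (F (u (i+1)) - F (u i))) := by
        rw [ENNReal.ofReal_sum_of_nonneg]
        intro i _
        have := hFmono (hu (Nat.le_succ i))
        linarith
    _ = ENNReal.ofReal (F (u m) - F (u 0)) := (Finset.sum_range_sub (fun k => F (u k)) m) ▸ rfl
    _ ≤ ENNReal.ofReal (∫ t in a..b, ‖Φ' t‖) := by
        apply ENNReal.ofReal_le_ofReal
        have h1 : F (u m) ≤ F b := hFmono (hus m).2
        have h2 : 0 ≤ F (u 0) := by
          have : F a ≤ F (u 0) := hFmono (hus 0).1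
          simpa [hF, intervalIntegral.integral_same] using this
        have : F b = ∫ t in a..b, ‖Φ' t‖ := rfl
        linarith


variable {E : Type*} [NormedAddCommGroup E] [NormedSpace ℝ E] [CompleteSpace E]

lemma integral_le_evariation (Φ Φ' : ℝ → E) (hd : ∀ t, HasDerivAt Φ (Φ' t) t)
    (hc : Continuous Φ') {a b : ℝ} (hab : a ≤ b) :
    ENNReal.ofReal (∫ t in a..b, ‖Φ' t‖) ≤ eVariationOn Φ (Icc a b) := by
  -- reduce to: for every c > 0, I ≤ sum + 2 c (b-a)
  refine ENNReal.le_of_forall_pos_le_add fun δ hδ hfin => ?_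
  set I : ℝ := ∫ t in a..b, ‖Φ' t‖ with hI
  have hba : (0:ℝ) ≤ b - a := by linarith
  set c : ℝ := (δ : ℝ) / (2 * (b - a) + 1) with hc0
  have hcpos : 0 < c := by positivity
  -- uniform continuity of Φ' on [a,b]
  obtain ⟨δ₀, hδ₀, hunif⟩ : ∃ δ₀ > 0, ∀ x ∈ Icc a b, ∀ y ∈ Icc a b, dist x y < δ₀ →
      dist (Φ' x) (Φ' y) < c := by
    have h := (isCompact_Icc (a := a) (b := b)).uniformContinuousOn_of_continuous
      (hc.continuousOn)
    rw [Metric.uniformContinuousOn_iff] at h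
    obtain ⟨δ₀, h1, h2⟩ := h c hcpos
    exact ⟨δ₀, h1, fun x hx y hy hxy => h2 x hx y hy hxy⟩
  -- choose N
  obtain ⟨N₀, hN₀⟩ := exists_nat_ge ((b - a) / (δ₀ / 2))
  set N : ℕ := max N₀ 1 with hN
  have hN1 : 1 ≤ N := le_max_right _ _
  have hNpos : (0:ℝ) < N := by exact_mod_cast hN1
  set Δ : ℝ := (b - a) / N with hΔ
  have hΔ0 : 0 ≤ Δ := by positivity
  have hΔδ : Δ < δ₀ := by
    have h1 : (b - a) / (δ₀ / 2) ≤ N := le_trans hN₀ (by exact_mod_cast le_max_left N₀ 1)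
    have : Δ ≤ δ₀ / 2 := by
      rw [hΔ, div_le_iff₀ hNpos]
      calc b - a = ((b-a)/(δ₀/2)) * (δ₀/2) := by field_simp
        _ ≤ N * (δ₀/2) := by
            apply mul_le_mul_of_nonneg_right h1 (by positivity)
        _ = δ₀/2 * N := by ring
    linarith
  set t : ℕ → ℝ := fun k => a + k * Δ with ht
  have htmono : Monotone t := by
    intro x y hxy
    simp only [ht]
    have : (x:ℝ) ≤ y := by exact_mod_cast hxy
    nlinarith
  have htN : t N = b := by
    simp only [ht, hΔ]
    field_simp
    ring
  have htmem : ∀ k ≤ N, t k ∈ Icc a b := by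
    intro k hk
    constructor
    · have h0 : 0 ≤ (k:ℝ) * Δ := by positivity
      simp only [ht]; linarith
    · rw [← htN]; exact htmono hk
  -- per-interval estimate
  have hIeq : I = ∑ k ∈ Finset.range N, ∫ s in t k..t (k+1), ‖Φ' s‖ := by
    have hsumint : (∑ k ∈ Finset.range N, ∫ s in t k..t (k+1), ‖Φ' s‖) =
        ∫ s in (t 0)..(t N), ‖Φ' s‖ :=
      intervalIntegral.sum_integral_adjacent_intervals fun k _ =>
        (hc.norm).intervalIntegrable _ _
    have ht0 : t 0 = a := by simp [ht]
    rw [hI, hsumint, ht0, htN]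
  have hkey : ∀ k < N, (∫ s in t k..t (k+1), ‖Φ' s‖) ≤ ‖Φ (t (k+1)) - Φ (t k)‖ + 2 * c * Δ := by
    intro k hk
    have hle : t k ≤ t (k+1) := htmono (Nat.le_succ k)
    have hdiff : t (k+1) - t k = Δ := by simp only [ht]; push_cast; ring
    have hclose : ∀ s ∈ Icc (t k) (t (k+1)), ‖Φ' s - Φ' (t k)‖ ≤ c := by
      intro s hs
      have hs1 : s ∈ Icc a b := by
        constructor
        · exact le_trans (htmem k hk.le).1 hs.1
        · exact le_trans hs.2 (htmem (k+1) hk).2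
      have h2 : dist s (t k) < δ₀ := by
        rw [Real.dist_eq, abs_of_nonneg (by linarith [hs.1])]
        have h3 : s - t k ≤ Δ := by
          have := hs.2
          rw [← hdiff]; linarith
        linarith
      have := hunif s hs1 (t k) (htmem k hk.le) h2
      rw [dist_eq_norm] at this
      linarith
    have hftc : Φ (t (k+1)) - Φ (t k) = ∫ s in t k..t (k+1), Φ' s :=
      (intervalIntegral.integral_eq_sub_of_hasDerivAt (fun s _ => hd s)
        (hc.intervalIntegrable _ _)).symm
    -- lower bound on ‖ΔΦ‖
    have hsplit : (∫ s in t k..t (k+1), Φ' s) =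
        (Δ • Φ' (t k)) + ∫ s in t k..t (k+1), (Φ' s - Φ' (t k)) := by
      rw [intervalIntegral.integral_sub (hc.intervalIntegrable _ _)
        (intervalIntegrable_const), intervalIntegral.integral_const, hdiff]
      abel
    set R : E := ∫ s in t k..t (k+1), (Φ' s - Φ' (t k)) with hRdef
    have hR : ‖R‖ ≤ c * Δ := by
      have h1 := intervalIntegral.norm_integral_le_of_norm_le_const (C := c)
        (f := fun s => Φ' s - Φ' (t k)) (a := t k) (b := t (k+1)) (fun s hs => by
          rw [uIoc_of_le hle] at hs
          exact hclose s ⟨hs.1.le, hs.2⟩)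
      calc ‖R‖ ≤ c * |t (k+1) - t k| := h1
        _ = c * Δ := by rw [abs_of_nonneg (by linarith), hdiff]
    have hlow : ‖Φ' (t k)‖ * Δ - c * Δ ≤ ‖Φ (t (k+1)) - Φ (t k)‖ := by
      have h1 : ‖Δ • Φ' (t k)‖ = Δ * ‖Φ' (t k)‖ := by
        rw [norm_smul, Real.norm_eq_abs, abs_of_nonneg hΔ0]
      have h4 : ‖Δ • Φ' (t k)‖ - ‖R‖ ≤ ‖Δ • Φ' (t k) + R‖ := by
        have h5 := norm_sub_norm_le (Δ • Φ' (t k)) (-R)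
        simp only [norm_neg, sub_neg_eq_add] at h5
        exact h5
      have h6 : ‖Φ (t (k+1)) - Φ (t k)‖ = ‖Δ • Φ' (t k) + R‖ := by
        rw [hftc, hsplit]
      rw [h6]
      linarith
    -- upper bound on integral of norm
    have hup : (∫ s in t k..t (k+1), ‖Φ' s‖) ≤ (‖Φ' (t k)‖ + c) * Δ := by
      have hmono : ∀ s ∈ Icc (t k) (t (k+1)), ‖Φ' s‖ ≤ ‖Φ' (t k)‖ + c := by
        intro s hs
        have := hclose s hs
        have h2 := norm_sub_norm_le (Φ' s) (Φ' (t k))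
        linarith
      calc (∫ s in t k..t (k+1), ‖Φ' s‖) ≤ ∫ s in t k..t (k+1), (‖Φ' (t k)‖ + c) := by
            apply intervalIntegral.integral_mono_on hle ((hc.norm).intervalIntegrable _ _)
              intervalIntegrable_const hmono
        _ = (t (k+1) - t k) * (‖Φ' (t k)‖ + c) := by
            rw [intervalIntegral.integral_const]; simp [smul_eq_mul]
        _ = (‖Φ' (t k)‖ + c) * Δ := by rw [hdiff]; ring
    nlinarith [hlow, hup, hcpos, hΔ0]
  -- assemble
  have hsum : I ≤ (∑ k ∈ Finset.range N, ‖Φ (t (k+1)) - Φ (t k)‖) + 2 * c * (b - a) := by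
    rw [hIeq]
    have h1 : ∑ k ∈ Finset.range N, (∫ s in t k..t (k+1), ‖Φ' s‖) ≤
        ∑ k ∈ Finset.range N, (‖Φ (t (k+1)) - Φ (t k)‖ + 2 * c * Δ) :=
      Finset.sum_le_sum fun k hk => hkey k (Finset.mem_range.1 hk)
    have h2 : ∑ k ∈ Finset.range N, (‖Φ (t (k+1)) - Φ (t k)‖ + 2 * c * Δ) =
        (∑ k ∈ Finset.range N, ‖Φ (t (k+1)) - Φ (t k)‖) + N * (2 * c * Δ) := by
      rw [Finset.sum_add_distrib, Finset.sum_const, Finset.card_range]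
      simp [nsmul_eq_mul]
    have h3 : (N:ℝ) * (2 * c * Δ) = 2 * c * (b - a) := by
      rw [hΔ]; field_simp
    linarith [h1, h2 ▸ h1]
  -- to ENNReal
  have hsums : ENNReal.ofReal (∑ k ∈ Finset.range N, ‖Φ (t (k+1)) - Φ (t k)‖) ≤
      eVariationOn Φ (Icc a b) := by
    set u : ℕ → ℝ := fun k => t (min k N) with hu
    have humono : Monotone u := fun x y hxy => htmono (min_le_min_right _ hxy)
    have humem : ∀ k, u k ∈ Icc a b := fun k => htmem _ (min_le_right _ _)
    have := eVariationOn.sum_le (f := Φ) (n := N) humono humem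
    calc ENNReal.ofReal (∑ k ∈ Finset.range N, ‖Φ (t (k+1)) - Φ (t k)‖)
        = ∑ k ∈ Finset.range N, edist (Φ (u (k+1))) (Φ (u k)) := by
          rw [ENNReal.ofReal_sum_of_nonneg (fun k _ => norm_nonneg _)]
          apply Finset.sum_congr rfl
          intro k hk
          have hk' := Finset.mem_range.1 hk
          have h1 : min (k+1) N = k+1 := min_eq_left hk'
          have h2 : min k N = k := min_eq_left hk'.le
          rw [edist_dist, dist_eq_norm, hu]
          simp only [h1, h2]
      _ ≤ eVariationOn Φ (Icc a b) := this
  have h2c : ENNReal.ofReal (2 * c * (b - a)) ≤ (δ : ℝ≥0∞) := by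
    have : 2 * c * (b - a) ≤ δ := by
      have hD : (0:ℝ) < 2*(b-a)+1 := by linarith
      have heq : 2 * ((δ:ℝ)/(2*(b-a)+1)) * (b-a) = (δ:ℝ) * (2*(b-a)) / (2*(b-a)+1) := by ring
      rw [hc0, heq, div_le_iff₀ hD]
      nlinarith [NNReal.coe_nonneg δ]
    calc ENNReal.ofReal (2 * c * (b - a)) ≤ ENNReal.ofReal (δ:ℝ) := ENNReal.ofReal_le_ofReal this
      _ = (δ : ℝ≥0∞) := ENNReal.ofReal_coe_nnreal
  calc ENNReal.ofReal I
      ≤ ENNReal.ofReal ((∑ k ∈ Finset.range N, ‖Φ (t (k+1)) - Φ (t k)‖) + 2 * c * (b - a)) :=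
        ENNReal.ofReal_le_ofReal hsum
    _ ≤ ENNReal.ofReal (∑ k ∈ Finset.range N, ‖Φ (t (k+1)) - Φ (t k)‖) +
        ENNReal.ofReal (2 * c * (b - a)) := ENNReal.ofReal_add_le
    _ ≤ eVariationOn Φ (Icc a b) + (δ : ℝ≥0∞) := add_le_add hsums h2c



lemma pt2_apply_zero (x y : ℝ) : (pt2 x y) 0 = x := rfl
lemma pt2_apply_one (x y : ℝ) : (pt2 x y) 1 = y := rfl

lemma pt2_injective_fst {x y x' y' : ℝ} (h : pt2 x y = pt2 x' y') : x = x' := by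
  have := congrArg (fun p : EuclideanSpace ℝ (Fin 2) => p 0) h
  simpa [pt2_apply_zero] using this

lemma affine_image_Icc {a b : ℝ} (hab : a ≤ b) :
    (fun s : ℝ => a + s * (b - a)) '' Icc 0 1 = Icc a b := by
  ext y
  constructor
  · rintro ⟨s, hs, rfl⟩
    simp only [mem_Icc] at hs
    dsimp only
    constructor
    · nlinarith [hs.1, hs.2]
    · nlinarith [hs.1, hs.2]
  · intro hy
    rcases eq_or_lt_of_le hab with h | h
    · subst h
      exact ⟨0, ⟨le_refl _, zero_le_one⟩, by
        have : y = a := le_antisymm hy.2 hy.1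
        simp [this]⟩
    · refine ⟨(y - a) / (b - a), ⟨?_, ?_⟩, ?_⟩
      · exact div_nonneg (by linarith [hy.1]) (by linarith)
      · rw [div_le_one (by linarith)]; linarith [hy.2]
      · dsimp only
        rw [div_mul_eq_mul_div, mul_div_assoc, div_self (by linarith : b - a ≠ 0), mul_one]
        ring

/-- The intrinsic distance within a graph equals the variation of the graph curve. -/
lemma intrinsicDist_graph (h : ℝ → ℝ) (hΦ : Continuous (fun t : ℝ => pt2 t (h t)))
    {a b : ℝ} (ha : 0 ≤ a) (hab : a ≤ b) (hb : b ≤ 1) :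
    intrinsicDist {p : EuclideanSpace ℝ (Fin 2) | ∃ t ∈ Icc (0:ℝ) 1, p = pt2 t (h t)}
      (pt2 a (h a)) (pt2 b (h b)) = eVariationOn (fun t : ℝ => pt2 t (h t)) (Icc a b) := by
  set Φ : ℝ → EuclideanSpace ℝ (Fin 2) := fun t => pt2 t (h t) with hΦdef
  set M : Set (EuclideanSpace ℝ (Fin 2)) := {p | ∃ t ∈ Icc (0:ℝ) 1, p = pt2 t (h t)} with hM
  apply le_antisymm
  · -- upper bound: the graph curve itself, reparametrized
    set γ : ℝ → EuclideanSpace ℝ (Fin 2) := fun s => Φ (a + s * (b - a)) with hγ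
    apply sInf_le
    refine ⟨γ, ?_, ?_, ?_, ?_, ?_⟩
    · exact hΦ.comp_continuousOn (by fun_prop)
    · intro s hs
      have hmem : a + s * (b - a) ∈ Icc a b := by
        rw [← affine_image_Icc hab]; exact ⟨s, hs, rfl⟩
      exact ⟨a + s * (b - a), ⟨le_trans ha hmem.1, le_trans hmem.2 hb⟩, rfl⟩
    · simp [hγ]; rfl
    · simp [hγ]; rfl
    · rw [hγ]
      have : (fun s : ℝ => Φ (a + s * (b - a))) = Φ ∘ (fun s : ℝ => a + s * (b - a)) := rfl
      rw [this, eVariationOn.comp_eq_of_monotoneOn Φ _ (fun u hu v hv huv => by nlinarith),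
        affine_image_Icc hab]
  · -- lower bound
    apply le_sInf
    rintro L ⟨γ, hγc, hγm, hγ0, hγ1, rfl⟩
    set u : ℝ → ℝ := fun s => (γ s) 0 with hu
    have hγΦ : ∀ s ∈ Icc (0:ℝ) 1, γ s = Φ (u s) := by
      intro s hs
      obtain ⟨t, _, hts⟩ := hγm hs
      have : u s = t := by rw [hu]; simp only [hts, pt2_apply_zero]
      rw [this, hts]
    have huc : ContinuousOn u (Icc 0 1) := by
      have h1 : Continuous fun p : EuclideanSpace ℝ (Fin 2) => p 0 := by
        exact (continuous_apply (0 : Fin 2)).comp (PiLp.continuous_ofLp 2 (fun _ : Fin 2 => ℝ))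
      exact h1.comp_continuousOn hγc
    have hu0 : u 0 = a := by
      have h1 : u 0 = γ 0 0 := rfl
      rw [h1, hγ0]; rfl
    have hu1 : u 1 = b := by
      have h1 : u 1 = γ 1 0 := rfl
      rw [h1, hγ1]; rfl
    have hvar : eVariationOn γ (Icc 0 1) = eVariationOn (Φ ∘ u) (Icc 0 1) :=
      eVariationOn.eq_of_eqOn (fun s hs => (hγΦ s hs))
    rw [hvar]
    -- we show eVariationOn Φ (Icc a b) ≤ eVariationOn (Φ ∘ u) (Icc 0 1)
    rw [eVariationOn]
    apply iSup_le
    rintro ⟨m, v, hv, hvs⟩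
    -- construct σ
    set S : ℕ → Set ℝ := fun k => {s ∈ Icc (0:ℝ) 1 | v k ≤ u s} with hS
    have hSclosed : ∀ k, IsClosed (S k) := by
      intro k
      have : S k = Icc (0:ℝ) 1 ∩ u ⁻¹' Ici (v k) := by
        ext s
        simp only [hS, Set.mem_setOf_eq, Set.mem_inter_iff, Set.mem_preimage, Set.mem_Ici]
      rw [this]
      exact ContinuousOn.preimage_isClosed_of_isClosed huc isClosed_Icc isClosed_Ici
    have hSne : ∀ k, (S k).Nonempty := by
      intro k
      exact ⟨1, ⟨zero_le_one, le_refl _⟩, by rw [hu1]; exact (hvs k).2⟩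
    have hSbdd : ∀ k, BddBelow (S k) := fun k =>
      ⟨0, fun s hs => hs.1.1⟩
    set σ : ℕ → ℝ := fun k => sInf (S k) with hσ
    have hσmem : ∀ k, σ k ∈ S k := fun k => (hSclosed k).csInf_mem (hSne k) (hSbdd k)
    have hσIcc : ∀ k, σ k ∈ Icc (0:ℝ) 1 := fun k => (hσmem k).1
    have hσmono : Monotone σ := by
      intro k l hkl
      apply csInf_le_csInf (hSbdd k) (hSne l)
      intro s hs
      exact ⟨hs.1, le_trans (hv hkl) hs.2⟩
    have huσ : ∀ k, u (σ k) = v k := by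
      intro k
      have h1 : v k ≤ u (σ k) := (hσmem k).2
      have h2 : u 0 ≤ v k := by rw [hu0]; exact (hvs k).1
      -- IVT on [0, σ k]
      have hsub : Icc (0:ℝ) (σ k) ⊆ Icc (0:ℝ) 1 := Icc_subset_Icc (le_refl _) (hσIcc k).2
      have hIVT := intermediate_value_Icc (hσIcc k).1 (huc.mono hsub)
      have : v k ∈ Icc (u 0) (u (σ k)) := ⟨h2, h1⟩
      obtain ⟨s, hs, hsv⟩ := hIVT this
      have hsS : s ∈ S k := ⟨⟨hs.1, le_trans hs.2 (hσIcc k).2⟩, hsv.ge⟩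
      have : σ k ≤ s := csInf_le (hSbdd k) hsS
      have hse : s = σ k := le_antisymm hs.2 this
      rw [← hse, hsv]
    calc ∑ i ∈ Finset.range m, edist (Φ (v (i+1))) (Φ (v i))
        = ∑ i ∈ Finset.range m, edist ((Φ ∘ u) (σ (i+1))) ((Φ ∘ u) (σ i)) := by
          apply Finset.sum_congr rfl
          intro i _
          simp only [Function.comp_apply, huσ]
      _ ≤ eVariationOn (Φ ∘ u) (Icc 0 1) := eVariationOn.sum_le (n := m) hσmono hσIcc


noncomputable def bumpTrain' (A ε : ℝ) (n : ℕ) (t : ℝ) : ℝ :=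
  A * (ε / 2) * ∑ i ∈ Finset.range (n - 1), triCube' ((t - ((i : ℝ) + 1 / 2) * ε) / (ε / 2))


lemma continuous_triCube : Continuous triCube := by unfold triCube; fun_prop

lemma pt2_smul_add (x y : ℝ) : pt2 x y = x • pt2 1 0 + y • pt2 0 1 := by
  ext i; fin_cases i <;> simp [pt2]

lemma hasDerivAt_pt2 {f k : ℝ → ℝ} {f' k' t : ℝ} (hf : HasDerivAt f f' t)
    (hk : HasDerivAt k k' t) :
    HasDerivAt (fun s => pt2 (f s) (k s)) (pt2 f' k') t := by
  have h1 : (fun s => pt2 (f s) (k s)) = fun s => f s • pt2 1 0 + k s • pt2 0 1 := by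
    funext s; exact pt2_smul_add _ _
  rw [h1, show pt2 f' k' = f' • pt2 1 0 + k' • pt2 0 1 from pt2_smul_add _ _]
  exact (hf.smul_const (pt2 1 0)).add (hk.smul_const (pt2 0 1))

lemma norm_pt2 (x y : ℝ) : ‖pt2 x y‖ = Real.sqrt (x ^ 2 + y ^ 2) := by
  rw [pt2, EuclideanSpace.norm_eq]
  simp [Fin.sum_univ_two, sq_abs]

lemma continuous_bumpTrain' (A ε : ℝ) (n : ℕ) : Continuous (bumpTrain' A ε n) := by
  unfold bumpTrain'
  apply Continuous.mul continuous_const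
  apply continuous_finset_sum
  intro i _
  exact continuous_triCube'.comp (by fun_prop)

lemma hasDerivAt_bumpTrain (A : ℝ) {ε : ℝ} (hε : ε ≠ 0) (n : ℕ) (t : ℝ) :
    HasDerivAt (bumpTrain A ε n) (bumpTrain' A ε n t) t := by
  have he2 : ε / 2 ≠ 0 := by simpa using hε
  have hterm : ∀ i ∈ Finset.range (n - 1), HasDerivAt
      (fun t => triCube ((t - ((i : ℝ) + 1 / 2) * ε) / (ε / 2)))
      (triCube' ((t - ((i : ℝ) + 1 / 2) * ε) / (ε / 2)) * (1 / (ε / 2))) t := by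
    intro i _
    have hinner : HasDerivAt (fun t : ℝ => (t - ((i : ℝ) + 1 / 2) * ε) / (ε / 2)) (1 / (ε / 2)) t := by
      have := ((hasDerivAt_id t).sub_const (((i : ℝ) + 1 / 2) * ε)).div_const (ε / 2)
      simpa using this
    exact (triCube_hasDeriv _).comp t hinner
  have hsum := HasDerivAt.fun_sum hterm
  have := hsum.const_mul (A * (ε / 2) ^ 2)
  have heq : (fun t => A * (ε / 2) ^ 2 * ∑ i ∈ Finset.range (n - 1),
      triCube ((t - ((i : ℝ) + 1 / 2) * ε) / (ε / 2))) = bumpTrain A ε n := rfl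
  rw [heq] at this
  refine this.congr_deriv ?_
  rw [bumpTrain', Finset.mul_sum, Finset.mul_sum]
  apply Finset.sum_congr rfl
  intro i _
  field_simp

/-- On `[kε, (k+1)ε]` only the `k`-th bump contributes. -/
lemma sum_single_bump (f : ℝ → ℝ) (hf : ∀ s, 1 ≤ |s| → f s = 0) {ε : ℝ} (hε : 0 < ε)
    {n : ℕ} {k : ℕ} (hk : k < n - 1) {t : ℝ} (ht : t ∈ Icc ((k : ℝ) * ε) (((k : ℝ) + 1) * ε)) :
    ∑ i ∈ Finset.range (n - 1), f ((t - ((i : ℝ) + 1 / 2) * ε) / (ε / 2)) =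
      f ((t - ((k : ℝ) + 1 / 2) * ε) / (ε / 2)) := by
  apply Finset.sum_eq_single_of_mem k (Finset.mem_range.2 hk)
  intro i _ hik
  apply hf
  rw [abs_div, abs_of_pos (by linarith : (0:ℝ) < ε / 2), le_div_iff₀ (by linarith)]
  rcases lt_or_gt_of_ne hik with h | h
  · -- i < k : t - (i+1/2)ε ≥ ε/2
    have hi : (i : ℝ) ≤ (k : ℝ) - 1 := by
      have : i + 1 ≤ k := h
      have := (Nat.cast_le (α := ℝ)).2 this
      push_cast at this
      linarith
    have h1 : t - ((i : ℝ) + 1 / 2) * ε ≥ ε / 2 := by nlinarith [ht.1]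
    calc 1 * (ε / 2) = ε / 2 := one_mul _
      _ ≤ t - ((i : ℝ) + 1 / 2) * ε := h1
      _ ≤ |t - ((i : ℝ) + 1 / 2) * ε| := le_abs_self _
  · -- i > k : (i+1/2)ε - t ≥ ε/2
    have hi : (k : ℝ) + 1 ≤ (i : ℝ) := by
      have : k + 1 ≤ i := h
      exact_mod_cast this
    have h1 : ((i : ℝ) + 1 / 2) * ε - t ≥ ε / 2 := by nlinarith [ht.2]
    calc 1 * (ε / 2) = ε / 2 := one_mul _
      _ ≤ ((i : ℝ) + 1 / 2) * ε - t := h1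
      _ ≤ |t - ((i : ℝ) + 1 / 2) * ε| := by rw [abs_sub_comm]; exact le_abs_self _

/-- Change of variables: integral of `q ∘ bumpTrain'` over one period. -/
lemma integral_bump_period (q : ℝ → ℝ) (A : ℝ) {ε : ℝ} (hε : 0 < ε) {n : ℕ} {k : ℕ}
    (hk : k < n - 1) :
    ∫ t in ((k : ℝ) * ε)..(((k : ℝ) + 1) * ε), q (bumpTrain' A ε n t) =
      (ε / 2) * ∫ s in (-1 : ℝ)..1, q (A * (ε / 2) * triCube' s) := by
  have he2 : (0:ℝ) < ε / 2 := by linarith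
  have hcongr : ∀ t ∈ Icc ((k : ℝ) * ε) (((k : ℝ) + 1) * ε),
      q (bumpTrain' A ε n t) = q (A * (ε / 2) * triCube' ((t - ((k : ℝ) + 1 / 2) * ε) / (ε / 2))) := by
    intro t ht
    rw [bumpTrain', sum_single_bump triCube' (fun s hs => triCube'_eq_zero hs) hε hk ht]
  have hle : (k : ℝ) * ε ≤ ((k : ℝ) + 1) * ε := by nlinarith
  rw [intervalIntegral.integral_congr (g := fun t =>
      q (A * (ε / 2) * triCube' ((t - ((k : ℝ) + 1 / 2) * ε) / (ε / 2))))
    (by rw [uIcc_of_le hle]; exact fun t ht => hcongr t ht)]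
  have h1 := intervalIntegral.integral_comp_sub_right
    (a := (k : ℝ) * ε) (b := ((k : ℝ) + 1) * ε)
    (f := fun x => q (A * (ε / 2) * triCube' (x / (ε / 2)))) (((k : ℝ) + 1 / 2) * ε)
  rw [h1]
  have e1 : (k : ℝ) * ε - ((k : ℝ) + 1 / 2) * ε = -(ε / 2) := by ring
  have e2 : ((k : ℝ) + 1) * ε - ((k : ℝ) + 1 / 2) * ε = ε / 2 := by ring
  rw [e1, e2]
  have h2 := intervalIntegral.integral_comp_div (a := -(ε/2)) (b := ε/2)
    (c := ε/2) (f := fun s => q (A * (ε / 2) * triCube' s)) (by linarith)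
  rw [h2]
  have e3 : -(ε/2)/(ε/2) = -1 := by
    rw [neg_div, div_self (ne_of_gt he2)]
  have e4 : (ε/2)/(ε/2) = 1 := div_self (ne_of_gt he2)
  rw [e3, e4, smul_eq_mul]

/-- bumpTrain vanishes at multiples of ε. -/
lemma bumpTrain_at_multiple (A : ℝ) {ε : ℝ} (hε : 0 < ε) (n : ℕ) (k : ℕ) :
    bumpTrain A ε n ((k:ℝ) * ε) = 0 := by
  rw [bumpTrain]
  have : ∀ i ∈ Finset.range (n-1), triCube (((k:ℝ) * ε - ((i : ℝ) + 1 / 2) * ε) / (ε / 2)) = 0 := by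
    intro i _
    apply triCube_eq_zero
    rw [abs_div, abs_of_pos (by linarith : (0:ℝ) < ε / 2), le_div_iff₀ (by linarith)]
    rcases le_or_gt (i + 1 : ℕ) k with h | h
    · have hi : (i : ℝ) + 1 ≤ (k : ℝ) := by exact_mod_cast h
      have : (k:ℝ) * ε - ((i : ℝ) + 1 / 2) * ε ≥ ε / 2 := by nlinarith
      calc 1 * (ε/2) ≤ (k:ℝ) * ε - ((i : ℝ) + 1 / 2) * ε := by linarith
        _ ≤ _ := le_abs_self _
    · have hi : (k : ℝ) ≤ (i : ℝ) := by exact_mod_cast Nat.lt_succ_iff.1 h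
      have : ((i : ℝ) + 1 / 2) * ε - (k:ℝ) * ε ≥ ε / 2 := by nlinarith
      calc 1 * (ε/2) ≤ ((i : ℝ) + 1 / 2) * ε - (k:ℝ) * ε := by linarith
        _ ≤ _ := by rw [abs_sub_comm]; exact le_abs_self _
  rw [Finset.sum_congr rfl this]
  simp

lemma sqrt_one_add_sq_le (u : ℝ) : Real.sqrt (1 + u ^ 2) ≤ 1 + u ^ 2 / 2 := by
  rw [show (1 : ℝ) + u ^ 2 / 2 = Real.sqrt ((1 + u ^ 2 / 2) ^ 2) from
    (Real.sqrt_sq (by positivity)).symm]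
  apply Real.sqrt_le_sqrt
  nlinarith [sq_nonneg u]

lemma le_sqrt_one_add_sq (u : ℝ) : 1 + u ^ 2 / 2 - u ^ 4 / 8 ≤ Real.sqrt (1 + u ^ 2) := by
  rcases le_or_gt (1 + u ^ 2 / 2 - u ^ 4 / 8) 0 with h | h
  · exact le_trans h (Real.sqrt_nonneg _)
  · rw [show Real.sqrt (1 + u ^ 2) = Real.sqrt (1 + u^2) from rfl]
    have h8 : u ^ 2 ≤ 8 := by nlinarith [sq_nonneg (u^2)]
    rw [← Real.sqrt_sq h.le]
    apply Real.sqrt_le_sqrt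
    have h9 : 0 ≤ u^2*u^2*u^2*(8 - u^2) := mul_nonneg (by positivity) (by linarith)
    nlinarith [h9]


lemma continuous_pt2_comp {f k : ℝ → ℝ} (hf : Continuous f) (hk : Continuous k) :
    Continuous fun t => pt2 (f t) (k t) := by
  have h1 : (fun t => pt2 (f t) (k t)) = fun t => f t • pt2 1 0 + k t • pt2 0 1 := by
    funext s; exact pt2_smul_add _ _
  rw [h1]
  exact (hf.smul continuous_const).add (hk.smul continuous_const)

lemma evariation_eq_integral {E : Type*} [NormedAddCommGroup E] [NormedSpace ℝ E]
    [CompleteSpace E] (Φ Φ' : ℝ → E) (hd : ∀ t, HasDerivAt Φ (Φ' t) t)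
    (hc : Continuous Φ') {a b : ℝ} (hab : a ≤ b) :
    eVariationOn Φ (Icc a b) = ENNReal.ofReal (∫ t in a..b, ‖Φ' t‖) :=
  le_antisymm (evariation_le_integral Φ Φ' hd hc hab) (integral_le_evariation Φ Φ' hd hc hab)

/-- In the two-curve setting (`M₁` a segment, `M₂` its bumped version, common
sample points `x_i = ((i−1)ε, 0)`), for all `1 ≤ i < j ≤ n`:
`d_{M₁}(x_i,x_j) = (j−i)ε`, `d_{M₂}(x_i,x_j) = (j−i)η`, and
`(j−i)(C₁ε³ − C₂ε⁵) ≤ d_{M₂} − d_{M₁} ≤ (j−i)C₁ε³ = C₁ε²·d_{M₁}`; in particular if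
`C₂ε² ≤ C₁/2` then `d_{M₂} − d_{M₁} ≥ (C₁/2)ε²·d_{M₁}`. -/
theorem two_curve_distances (A : ℝ) (hA : 0 < A) (n : ℕ) (hn : 2 ≤ n)
    (ε : ℝ) (hε : ε = 1 / ((n : ℝ) - 1))
    (M₁ M₂ : Set (EuclideanSpace ℝ (Fin 2)))
    (hM₁ : M₁ = {p | ∃ t ∈ Icc (0 : ℝ) 1, p = pt2 t 0})
    (hM₂ : M₂ = {p | ∃ t ∈ Icc (0 : ℝ) 1, p = pt2 t (bumpTrain A ε n t)})
    (x : ℕ → EuclideanSpace ℝ (Fin 2)) (hx : ∀ i, x i = pt2 (((i : ℝ) - 1) * ε) 0)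
    (η : ℝ) (hη : η = (eVariationOn (fun t => pt2 t (bumpTrain A ε n t)) (Icc 0 ε)).toReal)
    (C₁ : ℝ) (hC₁ : C₁ = A ^ 2 / 16 * ∫ t in (-1 : ℝ)..1, (deriv triCube t) ^ 2)
    (C₂ : ℝ) (hC₂ : C₂ = A ^ 4 / 256 * ∫ t in (-1 : ℝ)..1, (deriv triCube t) ^ 4)
    (i j : ℕ) (hi : 1 ≤ i) (hij : i < j) (hj : j ≤ n) :
    (intrinsicDist M₁ (x i) (x j)).toReal = ((j : ℝ) - i) * ε ∧
    (intrinsicDist M₂ (x i) (x j)).toReal = ((j : ℝ) - i) * η ∧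
    ((j : ℝ) - i) * (C₁ * ε ^ 3 - C₂ * ε ^ 5) ≤
      (intrinsicDist M₂ (x i) (x j)).toReal - (intrinsicDist M₁ (x i) (x j)).toReal ∧
    (intrinsicDist M₂ (x i) (x j)).toReal - (intrinsicDist M₁ (x i) (x j)).toReal ≤
      ((j : ℝ) - i) * (C₁ * ε ^ 3) ∧
    ((j : ℝ) - i) * (C₁ * ε ^ 3) = C₁ * ε ^ 2 * (intrinsicDist M₁ (x i) (x j)).toReal ∧
    (C₂ * ε ^ 2 ≤ C₁ / 2 →
      C₁ / 2 * ε ^ 2 * (intrinsicDist M₁ (x i) (x j)).toReal ≤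
        (intrinsicDist M₂ (x i) (x j)).toReal - (intrinsicDist M₁ (x i) (x j)).toReal) := by
  have hn1 : (1:ℝ) ≤ (n:ℝ) - 1 := by
    have h2 : (2:ℝ) ≤ (n:ℝ) := by exact_mod_cast hn
    linarith
  have hεpos : 0 < ε := by rw [hε]; positivity
  have hεn : ((n:ℝ) - 1) * ε = 1 := by
    rw [hε]; field_simp
  have hji : (1:ℝ) ≤ (j:ℝ) - (i:ℝ) := by
    have : (i:ℝ) + 1 ≤ (j:ℝ) := by exact_mod_cast hij
    linarith
  have hi1 : (1:ℝ) ≤ (i:ℝ) := by exact_mod_cast hi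
  have hjn : (j:ℝ) ≤ (n:ℝ) := by exact_mod_cast hj
  -- derivative data
  have hgd : ∀ t, HasDerivAt (bumpTrain A ε n) (bumpTrain' A ε n t) t :=
    hasDerivAt_bumpTrain A (ne_of_gt hεpos) n
  have hGc : Continuous (bumpTrain' A ε n) := continuous_bumpTrain' A ε n
  have hgc : Continuous (bumpTrain A ε n) :=
    continuous_iff_continuousAt.2 fun t => (hgd t).differentiableAt.continuousAt
  have hΦd : ∀ t, HasDerivAt (fun t => pt2 t (bumpTrain A ε n t))
      (pt2 1 (bumpTrain' A ε n t)) t :=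
    fun t => hasDerivAt_pt2 (hasDerivAt_id' (x := t)) (hgd t)
  have hΦ'c : Continuous (fun t => pt2 1 (bumpTrain' A ε n t)) :=
    continuous_pt2_comp continuous_const hGc
  have hΦc : Continuous (fun t => pt2 t (bumpTrain A ε n t)) :=
    continuous_pt2_comp continuous_id hgc
  have hspeed : ∀ t : ℝ, ‖pt2 1 (bumpTrain' A ε n t)‖ =
      Real.sqrt (1 + (bumpTrain' A ε n t) ^ 2) := fun t => by rw [norm_pt2]; norm_num
  have hqc : Continuous fun y : ℝ => Real.sqrt (1 + y ^ 2) :=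
    Real.continuous_sqrt.comp (by fun_prop)
  have hsc : Continuous fun t : ℝ => Real.sqrt (1 + (bumpTrain' A ε n t) ^ 2) :=
    Real.continuous_sqrt.comp (by fun_prop)
  -- sample points
  set ai : ℝ := ((i:ℝ) - 1) * ε with hai
  set aj : ℝ := ((j:ℝ) - 1) * ε with haj
  have hai0 : 0 ≤ ai := by rw [hai]; nlinarith
  have haij : ai ≤ aj := by rw [hai, haj]; nlinarith
  have haj1 : aj ≤ 1 := by
    rw [haj, ← hεn]; nlinarith
  have hcasti : ((i - 1 : ℕ) : ℝ) = (i:ℝ) - 1 := by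
    rw [Nat.cast_sub hi, Nat.cast_one]
  have hcastj : ((j - 1 : ℕ) : ℝ) = (j:ℝ) - 1 := by
    rw [Nat.cast_sub (le_trans hi hij.le), Nat.cast_one]
  have hgai : bumpTrain A ε n ai = 0 := by
    have := bumpTrain_at_multiple A hεpos n (i - 1)
    rwa [hcasti] at this
  have hgaj : bumpTrain A ε n aj = 0 := by
    have := bumpTrain_at_multiple A hεpos n (j - 1)
    rwa [hcastj] at this
  -- one-period integral value
  set Jv : ℝ := (ε / 2) * ∫ s in (-1:ℝ)..1,
    Real.sqrt (1 + (A * (ε / 2) * triCube' s) ^ 2) with hJv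
  have hn1' : 0 < n - 1 := by omega
  have hperiod : ∀ (k : ℕ), k < n - 1 →
      (∫ t in ((k:ℝ) * ε)..(((k:ℝ) + 1) * ε),
        Real.sqrt (1 + (bumpTrain' A ε n t) ^ 2)) = Jv := fun k hk =>
    integral_bump_period (fun y => Real.sqrt (1 + y ^ 2)) A hεpos hk
  have hJveq : (∫ t in (0:ℝ)..ε, Real.sqrt (1 + (bumpTrain' A ε n t) ^ 2)) = Jv := by
    have := hperiod 0 hn1'
    norm_num at this
    exact this
  have hJv0 : 0 ≤ Jv := by
    rw [← hJveq]
    exact intervalIntegral.integral_nonneg hεpos.le fun u _ => Real.sqrt_nonneg _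
  -- η
  have hvar0 : eVariationOn (fun t => pt2 t (bumpTrain A ε n t)) (Icc 0 ε) =
      ENNReal.ofReal Jv := by
    rw [evariation_eq_integral _ _ hΦd hΦ'c hεpos.le, ← hJveq]
    congr 1
    exact intervalIntegral.integral_congr fun t _ => hspeed t
  have hηJ : η = Jv := by
    rw [hη, hvar0, ENNReal.toReal_ofReal hJv0]
  -- integral over [ai, aj]
  set m : ℕ := j - i with hm
  have hmcast : ((m:ℕ) : ℝ) = (j:ℝ) - (i:ℝ) := by
    rw [hm, Nat.cast_sub hij.le]
  set p : ℕ → ℝ := fun k => ((i - 1 + k : ℕ) : ℝ) * ε with hp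
  have hp0 : p 0 = ai := by
    simp only [hp, Nat.add_zero, hcasti, hai]
  have hpm : p m = aj := by
    have h1 : i - 1 + m = j - 1 := by omega
    simp only [hp, h1, hcastj, haj]
  have hpk : ∀ k : ℕ, p (k + 1) = (((i - 1 + k : ℕ) : ℝ) + 1) * ε := by
    intro k
    simp only [hp]
    push_cast
    ring
  have hadj : ∀ k, k < m → (∫ t in (p k)..(p (k+1)),
      Real.sqrt (1 + (bumpTrain' A ε n t) ^ 2)) = Jv := by
    intro k hk
    have hkn : i - 1 + k < n - 1 := by omega
    rw [hpk k]
    exact hperiod (i - 1 + k) hkn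
  have hintaij : (∫ t in ai..aj, Real.sqrt (1 + (bumpTrain' A ε n t) ^ 2)) = (m:ℝ) * Jv := by
    rw [← hp0, ← hpm,
      ← intervalIntegral.sum_integral_adjacent_intervals (a := p) (n := m)
        (fun k _ => (hsc.intervalIntegrable _ _))]
    rw [Finset.sum_congr rfl fun k hk => hadj k (Finset.mem_range.1 hk)]
    rw [Finset.sum_const, Finset.card_range, nsmul_eq_mul]
  -- the two intrinsic distances
  have hd2 : intrinsicDist M₂ (x i) (x j) = ENNReal.ofReal ((m:ℝ) * Jv) := by
    rw [hM₂, hx i, hx j]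
    have e1 : pt2 ai (0:ℝ) = pt2 ai (bumpTrain A ε n ai) := by rw [hgai]
    have e2 : pt2 aj (0:ℝ) = pt2 aj (bumpTrain A ε n aj) := by rw [hgaj]
    rw [e1, e2, intrinsicDist_graph (bumpTrain A ε n) hΦc hai0 haij haj1,
      evariation_eq_integral _ _ hΦd hΦ'c haij, ← hintaij]
    congr 1
    exact intervalIntegral.integral_congr fun t _ => hspeed t
  have hd1 : intrinsicDist M₁ (x i) (x j) = ENNReal.ofReal ((m:ℝ) * ε) := by
    rw [hM₁, hx i, hx j]
    have h0 := intrinsicDist_graph (fun _ => (0:ℝ))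
      (continuous_pt2_comp continuous_id continuous_const) hai0 haij haj1
    rw [h0, evariation_eq_integral _ (fun _ => pt2 1 0)
      (fun t => hasDerivAt_pt2 (hasDerivAt_id' (x := t)) (hasDerivAt_const t 0))
      continuous_const haij]
    congr 1
    have hone : ‖pt2 (1:ℝ) (0:ℝ)‖ = 1 := by
      rw [norm_pt2]; norm_num
    rw [intervalIntegral.integral_congr (g := fun _ => (1:ℝ)) fun t _ => hone]
    rw [intervalIntegral.integral_const, smul_eq_mul, mul_one]
    rw [hmcast]
    ring
  -- squared/quartic integrals
  have hG2 : (∫ t in (0:ℝ)..ε, (bumpTrain' A ε n t) ^ 2) =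
      (ε / 2) * ∫ s in (-1:ℝ)..1, (A * (ε / 2) * triCube' s) ^ 2 := by
    have := integral_bump_period (fun y => y ^ 2) A hεpos hn1'
    norm_num at this
    exact this
  have hG4 : (∫ t in (0:ℝ)..ε, (bumpTrain' A ε n t) ^ 4) =
      (ε / 2) * ∫ s in (-1:ℝ)..1, (A * (ε / 2) * triCube' s) ^ 4 := by
    have := integral_bump_period (fun y => y ^ 4) A hεpos hn1'
    norm_num at this
    exact this
  have hC₁' : C₁ * ε ^ 3 = (1/2) * ∫ t in (0:ℝ)..ε, (bumpTrain' A ε n t) ^ 2 := by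
    rw [hC₁, deriv_triCube, hG2]
    have hpull : (∫ s in (-1:ℝ)..1, (A * (ε / 2) * triCube' s) ^ 2) =
        (A * (ε / 2)) ^ 2 * ∫ s in (-1:ℝ)..1, (triCube' s) ^ 2 := by
      rw [← intervalIntegral.integral_const_mul]
      exact intervalIntegral.integral_congr fun s _ => by ring
    rw [hpull]
    ring
  have hC₂' : C₂ * ε ^ 5 = (1/8) * ∫ t in (0:ℝ)..ε, (bumpTrain' A ε n t) ^ 4 := by
    rw [hC₂, deriv_triCube, hG4]
    have hpull : (∫ s in (-1:ℝ)..1, (A * (ε / 2) * triCube' s) ^ 4) =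
        (A * (ε / 2)) ^ 4 * ∫ s in (-1:ℝ)..1, (triCube' s) ^ 4 := by
      rw [← intervalIntegral.integral_const_mul]
      exact intervalIntegral.integral_congr fun s _ => by ring
    rw [hpull]
    ring
  -- bounds on Jv
  have hint1 : IntervalIntegrable (fun t => Real.sqrt (1 + (bumpTrain' A ε n t) ^ 2))
      MeasureTheory.volume 0 ε := hsc.intervalIntegrable _ _
  have hint2 : IntervalIntegrable (fun t => 1 + (bumpTrain' A ε n t) ^ 2 / 2)
      MeasureTheory.volume 0 ε :=
    Continuous.intervalIntegrable (by fun_prop) _ _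
  have hint3 : IntervalIntegrable
      (fun t => 1 + (bumpTrain' A ε n t) ^ 2 / 2 - (bumpTrain' A ε n t) ^ 4 / 8)
      MeasureTheory.volume 0 ε :=
    Continuous.intervalIntegrable (by fun_prop) _ _
  have hint4 : IntervalIntegrable (fun t => (bumpTrain' A ε n t) ^ 2)
      MeasureTheory.volume 0 ε :=
    Continuous.intervalIntegrable (by fun_prop) _ _
  have hint5 : IntervalIntegrable (fun t => (bumpTrain' A ε n t) ^ 4)
      MeasureTheory.volume 0 ε :=
    Continuous.intervalIntegrable (by fun_prop) _ _
  have hJvU : Jv ≤ ε + C₁ * ε ^ 3 := by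
    rw [← hJveq]
    calc (∫ t in (0:ℝ)..ε, Real.sqrt (1 + (bumpTrain' A ε n t) ^ 2))
        ≤ ∫ t in (0:ℝ)..ε, (1 + (bumpTrain' A ε n t) ^ 2 / 2) :=
          intervalIntegral.integral_mono_on hεpos.le hint1 hint2
            (fun t _ => sqrt_one_add_sq_le _)
      _ = ε + (1/2) * ∫ t in (0:ℝ)..ε, (bumpTrain' A ε n t) ^ 2 := by
          rw [intervalIntegral.integral_add (Continuous.intervalIntegrable (by fun_prop) _ _) (Continuous.intervalIntegrable (by fun_prop) _ _)]
          rw [intervalIntegral.integral_const, smul_eq_mul, mul_one, sub_zero]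
          rw [intervalIntegral.integral_div]
          ring
      _ = ε + C₁ * ε ^ 3 := by rw [hC₁']
  have hJvL : ε + (C₁ * ε ^ 3 - C₂ * ε ^ 5) ≤ Jv := by
    rw [← hJveq]
    calc ε + (C₁ * ε ^ 3 - C₂ * ε ^ 5)
        = ∫ t in (0:ℝ)..ε,
            (1 + (bumpTrain' A ε n t) ^ 2 / 2 - (bumpTrain' A ε n t) ^ 4 / 8) := by
          rw [intervalIntegral.integral_sub (Continuous.intervalIntegrable (by fun_prop) _ _) (Continuous.intervalIntegrable (by fun_prop) _ _),
            intervalIntegral.integral_add (Continuous.intervalIntegrable (by fun_prop) _ _) (Continuous.intervalIntegrable (by fun_prop) _ _)]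
          rw [intervalIntegral.integral_const, smul_eq_mul, mul_one, sub_zero]
          rw [intervalIntegral.integral_div, intervalIntegral.integral_div]
          rw [hC₁', hC₂']
          ring
      _ ≤ ∫ t in (0:ℝ)..ε, Real.sqrt (1 + (bumpTrain' A ε n t) ^ 2) :=
          intervalIntegral.integral_mono_on hεpos.le hint3 hint1
            (fun t _ => le_sqrt_one_add_sq _)
  -- final toReal values
  have hd1R : (intrinsicDist M₁ (x i) (x j)).toReal = ((j:ℝ) - i) * ε := by
    rw [hd1, ENNReal.toReal_ofReal (mul_nonneg (Nat.cast_nonneg m) hεpos.le), hmcast]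
  have hd2R : (intrinsicDist M₂ (x i) (x j)).toReal = ((j:ℝ) - i) * η := by
    rw [hd2, ENNReal.toReal_ofReal (mul_nonneg (Nat.cast_nonneg m) hJv0), hmcast, hηJ]
  have hD0 : (0:ℝ) ≤ (j:ℝ) - i := by linarith
  have hkey1 : ((j:ℝ) - i) * (C₁ * ε ^ 3 - C₂ * ε ^ 5) ≤
      ((j:ℝ) - i) * η - ((j:ℝ) - i) * ε := by
    have h2 : C₁ * ε ^ 3 - C₂ * ε ^ 5 ≤ Jv - ε := by linarith
    have h3 := mul_le_mul_of_nonneg_left h2 hD0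
    rw [hηJ]
    linarith [h3]
  have hkey2 : ((j:ℝ) - i) * η - ((j:ℝ) - i) * ε ≤ ((j:ℝ) - i) * (C₁ * ε ^ 3) := by
    have h2 : Jv - ε ≤ C₁ * ε ^ 3 := by linarith
    have h3 := mul_le_mul_of_nonneg_left h2 hD0
    rw [hηJ]
    linarith [h3]
  refine ⟨hd1R, hd2R, ?_, ?_, ?_, ?_⟩
  · rw [hd1R, hd2R]
    linarith [hkey1]
  · rw [hd1R, hd2R]
    linarith [hkey2]
  · rw [hd1R]; ring
  · intro hC
    rw [hd1R, hd2R]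
    have hε3 : (0:ℝ) ≤ ε ^ 3 := by positivity
    have h1 : C₂ * ε ^ 5 ≤ C₁ / 2 * ε ^ 3 := by
      have := mul_le_mul_of_nonneg_right hC hε3
      calc C₂ * ε ^ 5 = C₂ * ε ^ 2 * ε ^ 3 := by ring
        _ ≤ C₁ / 2 * ε ^ 3 := this
    have h2 : C₁ / 2 * ε ^ 2 * (((j:ℝ) - i) * ε) = ((j:ℝ) - i) * (C₁ / 2 * ε ^ 3) := by ring
    have h3 : C₁ / 2 * ε ^ 3 ≤ C₁ * ε ^ 3 - C₂ * ε ^ 5 := by linarith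
    have h4 := mul_le_mul_of_nonneg_left h3 hD0
    rw [h2]
    linarith [hkey1, h4]
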